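/- Let R = F₂ + uF₂ be the ring F₂[u]/(u²) (the dual numbers over Z/2Z). Let C ⊆ Rⁿ be a self-dual code generated by the rows r₁, …, r_k of a k×n matrix G, let c be a unit in R with c² = 1, and let X ∈ Rⁿ satisfy ⟨X, X⟩ = 1 (Euclidean inner product). Set yᵢ = ⟨rᵢ, X⟩ for 1 ≤ i ≤ k. Then the R-submodule of R^{n+2} generated by the row (1, 0, X) together with the rows (yᵢ, c·yᵢ, rᵢ) for 1 ≤ i ≤ k is a self-dual code of length n + 2. -/

import Mathlib

set_option maxHeartbeats 1000000

def dualCode {K : Type*} [CommRing K] {ι : Type*} [Fintype ι]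
    (C : Submodule K (ι → K)) : Submodule K (ι → K) where
  carrier := {x | ∀ y ∈ C, ∑ i, x i * y i = 0}
  zero_mem' := by intro y _; simp
  add_mem' := by
    intro a b ha hb y hy
    simp only [Set.mem_setOf_eq] at ha hb ⊢
    simp [Pi.add_apply, add_mul, Finset.sum_add_distrib, ha y hy, hb y hy]
  smul_mem' := by
    intro c a ha y hy
    simp only [Set.mem_setOf_eq] at ha ⊢
    simp [Pi.smul_apply, smul_eq_mul, mul_assoc, ← Finset.mul_sum, ha y hy]

lemma mem_dualCode_span {K : Type*} [CommRing K] {ι : Type*} [Fintype ι]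
    {S : Set (ι → K)} {x : ι → K} (h : ∀ y ∈ S, ∑ i, x i * y i = 0) :
    x ∈ dualCode (Submodule.span K S) := by
  intro y hy
  induction hy using Submodule.span_induction with
  | mem y hy => exact h y hy
  | zero => simp
  | add y z _ _ hy hz => simp [mul_add, Finset.sum_add_distrib, hy, hz]
  | smul c y _ hy => simp [← Finset.mul_sum, mul_left_comm, hy]

lemma dn_two (x : DualNumber (ZMod 2)) : x + x = 0 := by
  have h2 : (2 : DualNumber (ZMod 2)) = 0 := by
    have h : ((2:ℕ) : DualNumber (ZMod 2)) = 0 := by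
      rw [← TrivSqZeroExt.inl_natCast]
      have : ((2:ℕ) : ZMod 2) = 0 := by decide
      rw [this, TrivSqZeroExt.inl_zero]
    simpa using h
  rw [← two_mul, h2, zero_mul]

/-- The code generated by the block matrix `(I | M)`: the row space
`{(x, Mᵀx) : x ∈ K^ι}` inside `K^(ι ⊕ ι)`. -/
def genCode {K : Type*} [CommRing K] {ι : Type*} [Fintype ι]
    (M : Matrix ι ι K) : Submodule K (ι ⊕ ι → K) where
  carrier := {v | ∃ x : ι → K, v = Sum.elim x (Matrix.mulVec (Matrix.transpose M) x)}
  zero_mem' := ⟨0, by funext s; cases s <;> simp [Matrix.mulVec_zero]⟩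
  add_mem' := by
    rintro a b ⟨x, rfl⟩ ⟨y, rfl⟩
    exact ⟨x + y, by funext s; cases s <;> simp [Matrix.mulVec_add]⟩
  smul_mem' := by
    rintro c a ⟨x, rfl⟩
    exact ⟨c • x, by funext s; cases s <;> simp [Matrix.mulVec_smul]⟩

/-- The linear map `z ↦ (⟨z,X⟩, c⟨z,X⟩, z)`. -/
def extMap {K : Type*} [CommRing K] {n : ℕ} (c : K) (X : Fin n → K) :
    (Fin n → K) →ₗ[K] (Fin 2 ⊕ Fin n → K) where
  toFun z := Sum.elim ![∑ j, z j * X j, c * ∑ j, z j * X j] z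
  map_add' := by
    intro z z'
    funext s
    rcases s with s | j
    · fin_cases s <;>
        simp [add_mul, Finset.sum_add_distrib, mul_add]
    · simp
  map_smul' := by
    intro t z
    funext s
    rcases s with s | j
    · fin_cases s <;>
        simp [smul_eq_mul, mul_assoc, ← Finset.mul_sum, mul_left_comm]
    · simp

theorem extension_selfDual {n k : ℕ}
    (G : Matrix (Fin k) (Fin n) (DualNumber (ZMod 2)))
    (C : Submodule (DualNumber (ZMod 2)) (Fin n → DualNumber (ZMod 2)))
    (hgen : C = Submodule.span (DualNumber (ZMod 2)) (Set.range fun i => G i))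
    (hsd : C = dualCode C)
    (c : DualNumber (ZMod 2)) (hc : IsUnit c) (hc2 : c ^ 2 = 1)
    (X : Fin n → DualNumber (ZMod 2)) (hX : ∑ i, X i * X i = 1) :
    (Submodule.span (DualNumber (ZMod 2))
        ({Sum.elim ![1, 0] X} ∪
          Set.range fun i : Fin k =>
            Sum.elim ![∑ j, G i j * X j, c * ∑ j, G i j * X j] (G i)) :
        Submodule (DualNumber (ZMod 2)) (Fin 2 ⊕ Fin n → DualNumber (ZMod 2))) =
      dualCode (Submodule.span (DualNumber (ZMod 2))
        ({Sum.elim ![1, 0] X} ∪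
          Set.range fun i : Fin k =>
            Sum.elim ![∑ j, G i j * X j, c * ∑ j, G i j * X j] (G i))) := by
  let R := DualNumber (ZMod 2)
  set e : Fin 2 ⊕ Fin n → R := Sum.elim ![1, 0] X with he
  set g : Fin k → (Fin 2 ⊕ Fin n → R) :=
    fun i => Sum.elim ![∑ j, G i j * X j, c * ∑ j, G i j * X j] (G i) with hg
  set S : Set (Fin 2 ⊕ Fin n → R) := {e} ∪ Set.range g with hSdef
  set D : Submodule R (Fin 2 ⊕ Fin n → R) := Submodule.span R S with hD
  -- basic facts
  have hGC : ∀ i, G i ∈ C := by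
    intro i
    rw [hgen]
    exact Submodule.subset_span (Set.mem_range_self i)
  have hGG : ∀ i j, ∑ t, G i t * G j t = 0 := by
    intro i j
    have hi : G i ∈ dualCode C := hsd ▸ hGC i
    exact hi (G j) (hGC j)
  have hXG : ∀ i, ∑ t, X t * G i t = ∑ t, G i t * X t := by
    intro i; exact Finset.sum_congr rfl fun t _ => mul_comm _ _
  have heD : e ∈ D := Submodule.subset_span (Or.inl rfl)
  have hgD : ∀ i, g i ∈ D := fun i => Submodule.subset_span (Or.inr ⟨i, rfl⟩)
  apply le_antisymm
  · -- D ≤ dualCode D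
    rw [hD, Submodule.span_le]
    rintro v (rfl | ⟨i, rfl⟩) <;> apply mem_dualCode_span
    · rintro w (rfl | ⟨j, rfl⟩)
      · simp only [he, Fintype.sum_sum_type, Fin.sum_univ_two, Sum.elim_inl, Sum.elim_inr,
          Matrix.cons_val_zero, Matrix.cons_val_one, Matrix.head_cons, hX]
        simpa using dn_two 1
      · simp only [he, hg, Fintype.sum_sum_type, Fin.sum_univ_two, Sum.elim_inl, Sum.elim_inr,
          Matrix.cons_val_zero, Matrix.cons_val_one, Matrix.head_cons, one_mul, zero_mul,
          add_zero, hXG j]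
        exact dn_two _
    · rintro w (rfl | ⟨j, rfl⟩)
      · simp only [he, hg, Fintype.sum_sum_type, Fin.sum_univ_two, Sum.elim_inl, Sum.elim_inr,
          Matrix.cons_val_zero, Matrix.cons_val_one, Matrix.head_cons, mul_one, mul_zero,
          add_zero]
        exact dn_two _
      · simp only [hg, Fintype.sum_sum_type, Fin.sum_univ_two, Sum.elim_inl, Sum.elim_inr,
          Matrix.cons_val_zero, Matrix.cons_val_one, Matrix.head_cons, hGG i j, add_zero]
        have hcc : c * (∑ t, G i t * X t) * (c * ∑ t, G j t * X t)
            = (∑ t, G i t * X t) * (∑ t, G j t * X t) := by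
          have h : c * (∑ t, G i t * X t) * (c * ∑ t, G j t * X t)
              = c ^ 2 * ((∑ t, G i t * X t) * (∑ t, G j t * X t)) := by ring
          rw [h, hc2, one_mul]
        rw [hcc]
        exact dn_two _
  · -- dualCode D ≤ D
    intro v hv
    set a : R := v (Sum.inl 0) with ha
    set b : R := v (Sum.inl 1) with hb
    set w : Fin n → R := fun j => v (Sum.inr j) with hw
    have h1 : ∑ s, v s * e s = 0 := hv e heD
    have hwX : ∑ j, w j * X j + a = 0 := by
      simpa [he, Fintype.sum_sum_type, Fin.sum_univ_two, add_comm] using h1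
    have hwXa : ∑ j, w j * X j = a := by
      have := dn_two a
      linear_combination hwX - this
    have h3 : ∀ i, a * (∑ t, G i t * X t) + b * (c * ∑ t, G i t * X t)
        + ∑ j, w j * G i j = 0 := by
      intro i
      have := hv (g i) (hgD i)
      simpa [hg, Fintype.sum_sum_type, Fin.sum_univ_two] using this
    -- the corrected word
    set w'' : Fin n → R := fun j => w j + a * X j + b * c * X j with hw''
    have hw''C : w'' ∈ C := by
      rw [hsd, hgen]
      apply mem_dualCode_span
      rintro z ⟨i, rfl⟩
      have hsplit : ∑ j, w'' j * G i j
          = (∑ j, w j * G i j) + a * (∑ j, G i j * X j) + b * c * (∑ j, G i j * X j) := by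
        simp only [hw'', add_mul, Finset.sum_add_distrib, Finset.mul_sum]
        congr 1
        · congr 1
          rw [Finset.mul_sum (R := DualNumber (ZMod 2))]; exact Finset.sum_congr rfl fun t _ => by ring
        · rw [Finset.mul_sum (R := DualNumber (ZMod 2))]; exact Finset.sum_congr rfl fun t _ => by ring
      rw [hsplit]
      linear_combination h3 i
    -- the linear map z ↦ (⟨z,X⟩, c⟨z,X⟩, z)
    let φ := extMap c X
    have hφD : ∀ z ∈ C, φ z ∈ D := by
      have hle : C ≤ D.comap φ := by
        rw [hgen, Submodule.span_le]
        rintro z ⟨i, rfl⟩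
        exact hgD i
      exact fun z hz => hle hz
    have hφw : φ w'' ∈ D := hφD w'' hw''C
    -- compute the inner product ⟨w'', X⟩ = b * c
    have hw''X : ∑ j, w'' j * X j = b * c := by
      have hsplit : ∑ j, w'' j * X j
          = (∑ j, w j * X j) + a * (∑ j, X j * X j) + b * c * (∑ j, X j * X j) := by
        simp only [hw'', add_mul, Finset.sum_add_distrib, Finset.mul_sum]
        congr 1
        · congr 1
          rw [Finset.mul_sum (R := DualNumber (ZMod 2))]; exact Finset.sum_congr rfl fun t _ => by ring
        · rw [Finset.mul_sum (R := DualNumber (ZMod 2))]; exact Finset.sum_congr rfl fun t _ => by ring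
      rw [hsplit, hX, hwXa]
      linear_combination dn_two a
    have hphi : φ w'' = Sum.elim ![b * c, b] w'' := by
      show Sum.elim ![∑ j, w'' j * X j, c * ∑ j, w'' j * X j] w'' = _
      have hcb : c * (b * c) = b := by linear_combination b * hc2
      rw [hw''X, hcb]
    have hvdecomp : v = φ w'' + (a + b * c) • e := by
      rw [hphi]
      funext s
      rcases s with s | j
      · fin_cases s
        · show a = b * c + (a + b * c) * 1
          linear_combination -dn_two (b * c)
        · show b = b + (a + b * c) * 0
          ring
      · show w j = (w j + a * X j + b * c * X j) + (a + b * c) * X j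
        linear_combination -dn_two (a * X j) - dn_two (b * c * X j)
    rw [hvdecomp]
    exact D.add_mem hφw (D.smul_mem _ heD)
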